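/- If X is a finite simple graph on n vertices whose adjacency matrix has n distinct eigenvalues, then the rank of the average mixing matrix M̂(X) equals the rank of the coefficient matrix of X. -/

import Mathlib

open scoped Matrix

open Polynomial

section Aux

variable {V : Type*} [Fintype V] [DecidableEq V]

private lemma toMatrix'_mulVecLin' (M : Matrix V V ℝ) : LinearMap.toMatrix' M.mulVecLin = M := by
  ext i j
  simp [LinearMap.toMatrix'_apply, Matrix.mulVecLin_apply, Matrix.mulVec, dotProduct, Pi.single_apply]

private lemma trace_eq_rank_of_idem' (M : Matrix V V ℝ) (h : M * M = M) :
    M.trace = (M.rank : ℝ) := by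
  have hproj : LinearMap.IsProj (LinearMap.range M.mulVecLin) M.mulVecLin := by
    constructor
    · intro x; exact LinearMap.mem_range_self _ x
    · rintro x ⟨y, rfl⟩
      have h2 := congrArg Matrix.mulVecLin h
      rw [Matrix.mulVecLin_mul] at h2
      calc M.mulVecLin (M.mulVecLin y) = (M.mulVecLin ∘ₗ M.mulVecLin) y := rfl
        _ = M.mulVecLin y := by rw [h2]
  have := hproj.trace
  rw [LinearMap.trace_eq_matrix_trace ℝ (Pi.basisFun ℝ V), LinearMap.toMatrix_eq_toMatrix',
    toMatrix'_mulVecLin'] at this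
  rw [this, Matrix.rank]

private lemma rank_pos_of_ne_zero' (M : Matrix V V ℝ) (h : M ≠ 0) : 1 ≤ M.rank := by
  rw [Nat.one_le_iff_ne_zero]
  intro h0
  apply h
  have : LinearMap.range M.mulVecLin = ⊥ := by
    rwa [Matrix.rank, Submodule.finrank_eq_zero] at h0
  have hz : M.mulVecLin = 0 := LinearMap.range_eq_bot.mp this
  ext i j
  have h1 := congrFun (congrFun (congrArg (fun f => DFunLike.coe f) hz) (Pi.single j 1)) i
  simpa [Matrix.mulVecLin_apply, Matrix.mulVec, dotProduct, Pi.single_apply] using h1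

private lemma sq_entry_eq' (M : Matrix V V ℝ) (hs : M.IsSymm) (h1 : M.rank ≤ 1) (u w : V) :
    M u w * M u w = M u u * M w w := by
  set p := LinearMap.range M.mulVecLin with hp
  have hr : Module.rank ℝ ↥p ≤ 1 := by
    have := Module.finrank_eq_rank ℝ ↥p
    rw [← this]
    exact_mod_cast h1
  obtain ⟨v₀, hv₀⟩ := rank_le_one_iff.mp hr
  have hcol : ∀ j : V, (fun i => M i j) ∈ p := by
    intro j
    exact ⟨Pi.single j 1, by ext i; simp [Matrix.mulVecLin_apply, Matrix.mulVec,
      dotProduct, Pi.single_apply]⟩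
  have key : ∀ j : V, ∃ c : ℝ, ∀ i, c * (v₀ : V → ℝ) i = M i j := by
    intro j
    obtain ⟨c, hc⟩ := hv₀ ⟨_, hcol j⟩
    exact ⟨c, fun i => congrFun (congrArg (Subtype.val) hc) i⟩
  obtain ⟨cu, hcu⟩ := key u
  obtain ⟨cw, hcw⟩ := key w
  have hsym : M w u = M u w := congrFun (congrFun hs u) w
  calc M u w * M u w = M u w * M w u := by rw [hsym]
    _ = (cw * v₀.1 u) * (cu * v₀.1 w) := by rw [hcw u, hcu w]
    _ = (cu * v₀.1 u) * (cw * v₀.1 w) := by ring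
    _ = M u u * M w w := by rw [hcu u, hcw w]

private lemma charpoly_eq_prod' (A : Matrix V V ℝ)
    (θ : Fin (Fintype.card V) → ℝ) (hθ : Function.Injective θ)
    (E : Fin (Fintype.card V) → Matrix V V ℝ)
    (horth : ∀ r s, E r * E s = if r = s then E r else 0)
    (hne : ∀ r, E r ≠ 0)
    (hsum : ∑ r, E r = 1)
    (hdecomp : A = ∑ r, θ r • E r) :
    A.charpoly = ∏ r, (X - C (θ r)) := by
  have hroot : ∀ r, A.charpoly.IsRoot (θ r) := by
    intro r
    have hsub : θ r • (1 : Matrix V V ℝ) - A = ∑ s, (θ r - θ s) • E s := by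
      rw [hdecomp, ← hsum, Finset.smul_sum, ← Finset.sum_sub_distrib]
      exact Finset.sum_congr rfl fun s _ => (sub_smul _ _ _).symm
    have hmulE : (θ r • (1 : Matrix V V ℝ) - A) * E r = 0 := by
      rw [hsub, Finset.sum_mul]
      rw [Finset.sum_eq_single r]
      · rw [smul_mul_assoc, horth, if_pos rfl, sub_self, zero_smul]
      · intro s _ hs
        rw [smul_mul_assoc, horth, if_neg hs, smul_zero]
      · simp
    have hdet : (θ r • (1 : Matrix V V ℝ) - A).det = 0 := by
      by_contra hd
      have hU : IsUnit (θ r • (1 : Matrix V V ℝ) - A) :=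
        (Matrix.isUnit_iff_isUnit_det _).mpr (isUnit_iff_ne_zero.mpr hd)
      obtain ⟨U, hUe⟩ := hU
      apply hne r
      calc E r = 1 * E r := (one_mul _).symm
        _ = (↑U⁻¹ * ↑U) * E r := by rw [U.inv_mul]
        _ = ↑U⁻¹ * ((θ r • (1 : Matrix V V ℝ) - A) * E r) := by rw [Matrix.mul_assoc, hUe]
        _ = 0 := by rw [hmulE, Matrix.mul_zero]
    have hmap : (Matrix.charmatrix A).map (evalRingHom (θ r)) = θ r • (1 : Matrix V V ℝ) - A := by
      ext i j
      rcases eq_or_ne i j with rfl | hij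
      · simp [Matrix.charmatrix_apply_eq, Matrix.one_apply]
      · simp [Matrix.charmatrix_apply_ne _ _ _ hij, Matrix.one_apply_ne hij]
    have : A.charpoly.eval (θ r) = ((Matrix.charmatrix A).map (evalRingHom (θ r))).det := by
      rw [Matrix.charpoly]
      have := RingHom.map_det (evalRingHom (θ r)) (Matrix.charmatrix A)
      rw [RingHom.mapMatrix_apply] at this
      exact this
    rw [IsRoot, this, hmap, hdet]
  have hdvd : (∏ r, (X - C (θ r))) ∣ A.charpoly :=
    Finset.prod_dvd_of_coprime ((pairwise_coprime_X_sub_C hθ).set_pairwise _)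
      (fun r _ => (dvd_iff_isRoot).mpr (hroot r))
  obtain ⟨c, hc⟩ := hdvd
  have hqmonic : (∏ r, (X - C (θ r))).Monic :=
    monic_prod_of_monic _ _ fun r _ => monic_X_sub_C _
  have hqdeg : (∏ r, (X - C (θ r))).natDegree = Fintype.card V := by
    rw [natDegree_prod_of_monic _ _ fun r _ => monic_X_sub_C _]
    simp [natDegree_X_sub_C]
  have hcne : c ≠ 0 := by
    intro h0
    exact (Matrix.charpoly_monic A).ne_zero (by rw [hc, h0, mul_zero])
  have hcdeg : c.natDegree = 0 := by
    have := Matrix.charpoly_natDegree_eq_dim A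
    rw [hc, natDegree_mul hqmonic.ne_zero hcne, hqdeg] at this
    omega
  have hcmonic : c.Monic := by
    have := Matrix.charpoly_monic A
    rw [hc] at this
    unfold Polynomial.Monic at this ⊢
    rwa [leadingCoeff_mul, hqmonic.leadingCoeff, one_mul] at this
  rw [hc, eq_one_of_monic_natDegree_zero hcmonic hcdeg, mul_one]

private def sumEquiv' (u : V) : {x : V // x ≠ u} ⊕ Unit ≃ V where
  toFun := Sum.elim Subtype.val (fun _ => u)
  invFun := fun x => if h : x = u then Sum.inr () else Sum.inl ⟨x, h⟩
  left_inv := by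
    rintro (⟨x, hx⟩ | ⟨⟩)
    · simp [hx]
    · simp
  right_inv := fun x => by by_cases h : x = u <;> simp [h]

private lemma adjugate_diag' {R : Type*} [CommRing R] (M : Matrix V V R) (u : V) :
    M.adjugate u u
      = (M.submatrix (Subtype.val : {x : V // x ≠ u} → V) Subtype.val).det := by
  rw [Matrix.adjugate_apply, ← Matrix.det_submatrix_equiv_self (sumEquiv' u)]
  have hblock : (M.updateRow u (Pi.single u 1)).submatrix (sumEquiv' u) (sumEquiv' u)
      = Matrix.fromBlocks (M.submatrix (Subtype.val : {x : V // x ≠ u} → V) Subtype.val)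
          (Matrix.of fun i (_ : Unit) => M i.1 u) 0 1 := by
    ext i j
    rcases i with i | i <;> rcases j with j | j
    · simp [sumEquiv', Matrix.updateRow_ne i.2]
    · simp [sumEquiv', Matrix.updateRow_ne i.2]
    · simp [sumEquiv', Matrix.updateRow_self, Pi.single_eq_of_ne j.2]
    · simp [sumEquiv', Matrix.updateRow_self]
  rw [hblock, Matrix.det_fromBlocks_zero₂₁]
  simp

private lemma charmatrix_submatrix_ne' {R : Type*} [CommRing R] (A : Matrix V V R) (u : V) :
    Matrix.charmatrix (A.submatrix (Subtype.val : {x : V // x ≠ u} → V) Subtype.val)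
      = (Matrix.charmatrix A).submatrix (Subtype.val : {x : V // x ≠ u} → V) Subtype.val := by
  ext i j
  rcases eq_or_ne i j with rfl | hij
  · simp [Matrix.charmatrix_apply_eq]
  · have : (i : V) ≠ (j : V) := fun h => hij (Subtype.ext h)
    simp [Matrix.charmatrix_apply_ne _ _ _ hij, Matrix.charmatrix_apply_ne _ _ _ this]

private lemma charmatrix_decomp' (A : Matrix V V ℝ)
    (θ : Fin (Fintype.card V) → ℝ)
    (E : Fin (Fintype.card V) → Matrix V V ℝ)
    (hsum : ∑ r, E r = 1)
    (hdecomp : A = ∑ r, θ r • E r) :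
    Matrix.charmatrix A = ∑ r, (X - C (θ r)) • (E r).map (C : ℝ → ℝ[X]) := by
  ext i j
  rw [Matrix.sum_apply]
  simp only [Matrix.smul_apply, Matrix.map_apply, smul_eq_mul, sub_mul]
  rw [Finset.sum_sub_distrib, ← Finset.mul_sum]
  have hs1 : ∑ r, C ((E r) i j) = C ((1 : Matrix V V ℝ) i j) := by
    rw [← map_sum, ← Matrix.sum_apply, hsum]
  have hs2 : ∑ r, C (θ r) * C ((E r) i j) = C (A i j) := by
    have : ∀ r ∈ Finset.univ, C (θ r) * C ((E r) i j) = C (θ r * (E r) i j) := by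
      intro r _; rw [← _root_.map_mul]
    rw [Finset.sum_congr rfl this, ← map_sum]
    congr 1
    rw [hdecomp, Matrix.sum_apply]
    simp [Matrix.smul_apply]
  rw [hs1, hs2]
  rcases eq_or_ne i j with rfl | hij
  · rw [Matrix.charmatrix_apply_eq, Matrix.one_apply_eq]
    simp
  · rw [Matrix.charmatrix_apply_ne _ _ _ hij, Matrix.one_apply_ne hij]
    simp

private lemma adjugate_charmatrix' (A : Matrix V V ℝ)
    (θ : Fin (Fintype.card V) → ℝ)
    (E : Fin (Fintype.card V) → Matrix V V ℝ)
    (horth : ∀ r s, E r * E s = if r = s then E r else 0)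
    (hsum : ∑ r, E r = 1)
    (hcm : Matrix.charmatrix A = ∑ r, (X - C (θ r)) • (E r).map (C : ℝ → ℝ[X]))
    (hcp : A.charpoly = ∏ r, (X - C (θ r))) :
    (Matrix.charmatrix A).adjugate
      = ∑ s, (∏ t ∈ Finset.univ.erase s, (X - C (θ t))) • (E s).map (C : ℝ → ℝ[X]) := by
  set p : Fin (Fintype.card V) → ℝ[X]
    := fun s => ∏ t ∈ Finset.univ.erase s, (X - C (θ t)) with hp
  set P : Matrix V V ℝ[X] := ∑ s, p s • (E s).map (C : ℝ → ℝ[X]) with hP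
  have hEE : ∀ r s, ((E r).map (C : ℝ → ℝ[X])) * ((E s).map C)
      = if r = s then (E r).map (C : ℝ → ℝ[X]) else 0 := by
    intro r s
    rw [← Matrix.map_mul, horth]
    split_ifs
    · rfl
    · exact Matrix.map_zero _ (map_zero C)
  have hmul : Matrix.charmatrix A * P = A.charpoly • (1 : Matrix V V ℝ[X]) := by
    rw [hcm, hP, Finset.sum_mul_sum]
    calc (∑ r, ∑ s, ((X - C (θ r)) • (E r).map (C : ℝ → ℝ[X]))
            * (p s • (E s).map (C : ℝ → ℝ[X])))
        = ∑ r, ((X - C (θ r)) * p r) • (E r).map (C : ℝ → ℝ[X]) := by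
          refine Finset.sum_congr rfl fun r _ => ?_
          rw [Finset.sum_eq_single r]
          · rw [smul_mul_assoc, mul_smul_comm, smul_smul, hEE, if_pos rfl]
          · intro s _ hs
            rw [smul_mul_assoc, mul_smul_comm, smul_smul, hEE, if_neg (Ne.symm hs),
              smul_zero]
          · simp
      _ = ∑ r, A.charpoly • (E r).map (C : ℝ → ℝ[X]) := by
          refine Finset.sum_congr rfl fun r _ => ?_
          congr 1
          rw [hcp, hp, ← Finset.mul_prod_erase Finset.univ _ (Finset.mem_univ r)]
      _ = A.charpoly • (1 : Matrix V V ℝ[X]) := by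
          rw [← Finset.smul_sum]
          congr 1
          have : ∑ r, (E r).map (C : ℝ → ℝ[X]) = (∑ r, E r).map (C : ℝ → ℝ[X]) := by
            simp_rw [← RingHom.mapMatrix_apply]
            rw [map_sum]
          rw [this, hsum, Matrix.map_one _ (map_zero C) (map_one C)]
  have h1 : Matrix.charmatrix A * ((Matrix.charmatrix A).adjugate - P) = 0 := by
    rw [Matrix.mul_sub, Matrix.mul_adjugate, hmul,
      show (Matrix.charmatrix A).det = A.charpoly from rfl, sub_self]
  have h2 : A.charpoly • ((Matrix.charmatrix A).adjugate - P) = 0 := by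
    have h3 := congrArg (fun M => (Matrix.charmatrix A).adjugate * M) h1
    simp only [Matrix.mul_zero] at h3
    rw [← Matrix.mul_assoc, Matrix.adjugate_mul, Matrix.smul_mul, Matrix.one_mul] at h3
    rw [show (Matrix.charmatrix A).det = A.charpoly from rfl] at h3
    exact h3
  have hnz : A.charpoly ≠ 0 := (Matrix.charpoly_monic A).ne_zero
  have h4 : (Matrix.charmatrix A).adjugate - P = 0 := by
    refine Matrix.ext fun i j => ?_
    have := congrFun (congrFun
      (congrArg (fun M : Matrix V V ℝ[X] => (M : Matrix V V ℝ[X])) h2) i) j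
    simp only [Matrix.smul_apply, Matrix.zero_apply, smul_eq_mul] at this
    rcases mul_eq_zero.mp this with h | h
    · exact absurd h hnz
    · rw [Matrix.sub_apply, Matrix.zero_apply, ← Matrix.sub_apply]
      exact h
  rw [← sub_eq_zero]
  exact h4

private lemma isUnit_coeffB' (n : ℕ) (θ : Fin n → ℝ) (hθ : Function.Injective θ) :
    IsUnit (Matrix.of fun (s r : Fin n) =>
      (∏ t ∈ Finset.univ.erase s, (X - C (θ t))).coeff (r : ℕ)).det := by
  set p : Fin n → ℝ[X] := fun s => ∏ t ∈ Finset.univ.erase s, (X - C (θ t)) with hp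
  set B : Matrix (Fin n) (Fin n) ℝ := Matrix.of fun s r => (p s).coeff (r : ℕ) with hB
  have hdeg : ∀ s : Fin n, (p s).natDegree < n := by
    intro s
    rw [hp, natDegree_prod_of_monic _ _ fun t _ => monic_X_sub_C _]
    simp only [natDegree_X_sub_C, Finset.sum_const, smul_eq_mul, mul_one]
    rw [Finset.card_erase_of_mem (Finset.mem_univ s), Finset.card_univ, Fintype.card_fin]
    have := s.pos
    omega
  have heval : ∀ (s : Fin n) (x : ℝ), (p s).eval x = ∏ t ∈ Finset.univ.erase s, (x - θ t) := by
    intro s x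
    rw [hp, eval_prod]
    exact Finset.prod_congr rfl fun t _ => by simp
  have hBW : B * (Matrix.vandermonde θ)ᵀ
      = Matrix.diagonal (fun s => (p s).eval (θ s)) := by
    ext s t
    rw [Matrix.mul_apply]
    have : ∑ r : Fin n, B s r * (Matrix.vandermonde θ)ᵀ r t
        = ∑ r ∈ Finset.range n, (p s).coeff r * θ t ^ r := by
      rw [← Fin.sum_univ_eq_sum_range (fun r => (p s).coeff r * θ t ^ r) n]
      exact Finset.sum_congr rfl fun r _ => by
        simp [hB, Matrix.vandermonde, Matrix.transpose_apply]
    rw [this, ← eval_eq_sum_range' (hdeg s)]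
    rcases eq_or_ne s t with rfl | hst
    · rw [Matrix.diagonal_apply_eq]
    · rw [Matrix.diagonal_apply_ne _ hst, heval]
      exact Finset.prod_eq_zero (Finset.mem_erase.mpr ⟨Ne.symm hst, Finset.mem_univ t⟩)
        (by simp)
  have hdiag : ∀ s, (p s).eval (θ s) ≠ 0 := by
    intro s
    rw [heval, Finset.prod_ne_zero_iff]
    intro t ht
    exact sub_ne_zero.mpr fun h => (Finset.mem_erase.mp ht).1 (hθ h.symm)
  have hdet : B.det * (Matrix.vandermonde θ)ᵀ.det = ∏ s, (p s).eval (θ s) := by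
    rw [← Matrix.det_mul, hBW, Matrix.det_diagonal]
  have hBne : B.det ≠ 0 := by
    intro h0
    have := hdet
    rw [h0, zero_mul] at this
    exact (Finset.prod_ne_zero_iff.mpr fun s _ => hdiag s) this.symm
  exact isUnit_iff_ne_zero.mpr hBne

end Aux

/-- The coefficient matrix of a graph with adjacency matrix `A`: its `(u, r)` entry is the
coefficient of `t^r` (i.e. of `t^{(r+1)-1}`) in the characteristic polynomial of the matrix
obtained from `A` by deleting the row and column of the vertex `u`. -/
noncomputable def coeffMatrix {V : Type*} [Fintype V] [DecidableEq V]
    (A : Matrix V V ℝ) : Matrix V (Fin (Fintype.card V)) ℝ :=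
  Matrix.of fun u r =>
    (Matrix.charpoly (A.submatrix (Subtype.val : {x : V // x ≠ u} → V)
      (Subtype.val : {x : V // x ≠ u} → V))).coeff (r : ℕ)

/-- If a graph `X` on `n` vertices has `n` distinct eigenvalues, then the
rank of its average mixing matrix equals the rank of its coefficient matrix. -/
theorem rank_avgMixing_eq_rank_coeffMatrix {V : Type*} [Fintype V] [DecidableEq V]
    (G : SimpleGraph V) [DecidableRel G.Adj]
    (A : Matrix V V ℝ) (hA : A = G.adjMatrix ℝ)
    (θ : Fin (Fintype.card V) → ℝ) (hθ : Function.Injective θ)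
    (E : Fin (Fintype.card V) → Matrix V V ℝ)
    (hsymm : ∀ r, (E r).IsSymm)
    (horth : ∀ r s, E r * E s = if r = s then E r else 0)
    (hne : ∀ r, E r ≠ 0)
    (hsum : ∑ r, E r = 1)
    (hdecomp : A = ∑ r, θ r • E r) :
    (∑ r, E r ⊙ E r).rank = (coeffMatrix A).rank := by
  classical
  -- each `E r` has rank one
  have hidem : ∀ r, E r * E r = E r := fun r => by rw [horth, if_pos rfl]
  have htr : ∀ r, (E r).trace = ((E r).rank : ℝ) :=
    fun r => trace_eq_rank_of_idem' (E r) (hidem r)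
  have hsumrank : ∑ r, (E r).rank = Fintype.card V := by
    have hs : (∑ r, ((E r).rank : ℝ)) = (Fintype.card V : ℝ) := by
      rw [← Finset.sum_congr rfl (fun r _ => htr r), ← Matrix.trace_sum, hsum,
        Matrix.trace_one]
    exact_mod_cast hs
  have hrank1 : ∀ r, (E r).rank ≤ 1 := by
    intro r
    have h1 : ∀ s, 1 ≤ (E s).rank := fun s => rank_pos_of_ne_zero' _ (hne s)
    have h2 : (E r).rank + ∑ s ∈ Finset.univ.erase r, (E s).rank = Fintype.card V := by
      rw [Finset.add_sum_erase Finset.univ (fun s => (E s).rank) (Finset.mem_univ r)]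
      exact hsumrank
    have h3 : (Finset.univ.erase r).card * 1
        ≤ ∑ s ∈ Finset.univ.erase r, (E s).rank := by
      have := Finset.card_nsmul_le_sum (Finset.univ.erase r) (fun s => (E s).rank) 1
        (fun s _ => h1 s)
      simpa using this
    rw [Finset.card_erase_of_mem (Finset.mem_univ r), Finset.card_univ, Fintype.card_fin] at h3
    have h4 := r.pos
    omega
  -- the diagonal matrix `N`
  set N : Matrix V (Fin (Fintype.card V)) ℝ
    := Matrix.of fun u s => (E s) u u with hN
  -- the average mixing matrix is `N * Nᵀ`
  have hM : (∑ r, E r ⊙ E r) = N * Nᵀ := by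
    ext u w
    rw [Matrix.sum_apply, Matrix.mul_apply]
    refine Finset.sum_congr rfl fun r _ => ?_
    rw [Matrix.hadamard_apply, Matrix.transpose_apply]
    exact sq_entry_eq' (E r) (hsymm r) (hrank1 r) u w
  -- the coefficient matrix is `N * B`
  have hcp := charpoly_eq_prod' A θ hθ E horth hne hsum hdecomp
  have hcm := charmatrix_decomp' A θ E hsum hdecomp
  have hadj := adjugate_charmatrix' A θ E horth hsum hcm hcp
  set B : Matrix (Fin (Fintype.card V)) (Fin (Fintype.card V)) ℝ
    := Matrix.of fun s r => (∏ t ∈ Finset.univ.erase s, (X - C (θ t))).coeff (r : ℕ) with hB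
  have hCM : coeffMatrix A = N * B := by
    ext u r
    simp only [coeffMatrix, Matrix.of_apply]
    rw [Matrix.charpoly, charmatrix_submatrix_ne', ← adjugate_diag', hadj]
    rw [Matrix.sum_apply, finset_sum_coeff, Matrix.mul_apply]
    refine Finset.sum_congr rfl fun s _ => ?_
    rw [Matrix.smul_apply, Matrix.map_apply, smul_eq_mul, mul_comm, coeff_C_mul]
    rfl
  rw [hM, hCM, Matrix.rank_self_mul_transpose,
    Matrix.rank_mul_eq_left_of_isUnit_det B N (isUnit_coeffB' (Fintype.card V) θ hθ)]
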